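/- arXiv:2107.06152 — 2 statements merged into one kernel-verified Lean document; each statement's English description precedes it below -/
import Mathlib

section
/- Let M be a finite set and C a downward closed collection of subsets of M. Let a, b ∈ Δ_C and suppose the whole line segment {(1−t)·a + t·b : t ∈ [0,1]} is contained in Δ_C. Let W = supp(a) ∪ supp(b), where supp(λ) = {α | λ_α > 0}. Then W ∈ C, and for every t with 0 < t < 1 the point (1−t)·a + t·b lies in the interior int Δ_W; moreover W is the unique element of C with this property. (A line segment contained in Δ_C lies entirely within the interior of a unique simplex, except possibly its endpoints, which lie in Δ_W and may lie on faces of Δ_W.) -/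
/-- The realisation simplex `Δ_X ⊆ ℝ^M` spanned by a subset `X ⊆ M`. -/
def simplexOn {M : Type*} [Fintype M] (X : Set M) : Set (M → ℝ) :=
  {l | (∀ α, 0 ≤ l α) ∧ (∑ α, l α = 1) ∧ ∀ α ∉ X, l α = 0}

/-- The interior of the simplex `Δ_X`. -/
def simplexInterior {M : Type*} [Fintype M] (X : Set M) : Set (M → ℝ) :=
  {l | l ∈ simplexOn X ∧ ∀ α ∈ X, 0 < l α}

/-- The realisation `Δ_C` of a collection `C` of subsets of `M`. -/
def realisation {M : Type*} [Fintype M] (C : Set (Set M)) : Set (M → ℝ) :=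
  ⋃ X ∈ C, simplexOn X

/-- The support of a weight function. -/
def supportOf {M : Type*} (l : M → ℝ) : Set M := {α | 0 < l α}

/-- A line segment contained in the realisation `Δ_C` lies, except possibly at
its endpoints, entirely within the interior of a unique simplex, namely the
one spanned by `W = supp a ∪ supp b`; its endpoints lie in `Δ_W`. -/
theorem segment_in_unique_interior {M : Type*} [Fintype M]
    (C : Set (Set M)) (hC : ∀ X ∈ C, ∀ Y ⊆ X, Y ∈ C)
    (a b : M → ℝ) (ha : a ∈ realisation C) (hb : b ∈ realisation C)
    (hseg : ∀ t ∈ Set.Icc (0 : ℝ) 1,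
      (fun α => (1 - t) * a α + t * b α) ∈ realisation C) :
    supportOf a ∪ supportOf b ∈ C ∧
    a ∈ simplexOn (supportOf a ∪ supportOf b) ∧
    b ∈ simplexOn (supportOf a ∪ supportOf b) ∧
    (∀ t : ℝ, 0 < t → t < 1 →
      (fun α => (1 - t) * a α + t * b α) ∈
        simplexInterior (supportOf a ∪ supportOf b)) ∧
    ∀ X ∈ C, (∀ t : ℝ, 0 < t → t < 1 →
        (fun α => (1 - t) * a α + t * b α) ∈ simplexInterior X) →
      X = supportOf a ∪ supportOf b := by
  obtain ⟨Xa, hXa, haX⟩ : ∃ X ∈ C, a ∈ simplexOn X := by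
    simpa [realisation] using ha
  obtain ⟨Xb, hXb, hbX⟩ : ∃ X ∈ C, b ∈ simplexOn X := by
    simpa [realisation] using hb
  obtain ⟨ha0, ha1, ha2⟩ := haX
  obtain ⟨hb0, hb1, hb2⟩ := hbX
  set W := supportOf a ∪ supportOf b with hW
  -- midpoint
  have hmid := hseg (1/2) (by norm_num)
  obtain ⟨Y, hY, hmY⟩ : ∃ X ∈ C, (fun α => (1 - 1/2) * a α + (1/2) * b α) ∈ simplexOn X := by
    simpa [realisation] using hmid
  have hWY : W ⊆ Y := by
    intro α hα
    by_contra hαY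
    have h0 := hmY.2.2 α hαY
    simp only at h0
    have h1 : (1 - 1/2 : ℝ) * a α + (1/2) * b α > 0 := by
      rcases hα with h | h
      · have := ha0 α; have := hb0 α
        have ha' : (0:ℝ) < a α := h
        nlinarith
      · have := ha0 α; have := hb0 α
        have hb' : (0:ℝ) < b α := h
        nlinarith
    linarith
  have hWC : W ∈ C := hC Y hY W hWY
  have haW : a ∈ simplexOn W := by
    refine ⟨ha0, ha1, fun α hα => ?_⟩
    have : α ∉ supportOf a := fun h => hα (Or.inl h)
    have := ha0 α
    simp only [supportOf, Set.mem_setOf_eq, not_lt] at *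
    linarith
  have hbW : b ∈ simplexOn W := by
    refine ⟨hb0, hb1, fun α hα => ?_⟩
    have : α ∉ supportOf b := fun h => hα (Or.inr h)
    have := hb0 α
    simp only [supportOf, Set.mem_setOf_eq, not_lt] at *
    linarith
  have hint : ∀ t : ℝ, 0 < t → t < 1 →
      (fun α => (1 - t) * a α + t * b α) ∈ simplexInterior W := by
    intro t ht0 ht1
    have hpos : ∀ α, 0 ≤ (1 - t) * a α + t * b α := fun α => by
      have := ha0 α; have := hb0 α; nlinarith
    refine ⟨⟨hpos, ?_, ?_⟩, ?_⟩
    · simp only [Finset.sum_add_distrib, ← Finset.mul_sum, ha1, hb1]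
      ring
    · intro α hα
      have h1 : a α = 0 := haW.2.2 α hα
      have h2 : b α = 0 := hbW.2.2 α hα
      simp [h1, h2]
    · intro α hα
      rcases hα with h | h
      · have ha' : (0:ℝ) < a α := h
        have := hb0 α
        simp only
        nlinarith
      · have hb' : (0:ℝ) < b α := h
        have := ha0 α
        simp only
        nlinarith
  refine ⟨hWC, haW, hbW, hint, ?_⟩
  intro X hX hXint
  have h1 := hXint (1/2) (by norm_num) (by norm_num)
  have h2 := hint (1/2) (by norm_num) (by norm_num)
  ext α
  constructor
  · intro hα
    have hpos := h1.2 α hα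
    by_contra hαW
    have := h2.1.2.2 α hαW
    simp only at this hpos
    linarith
  · intro hα
    have hpos := h2.2 α hα
    by_contra hαX
    have := h1.1.2.2 α hαX
    simp only at this hpos
    linarith
end

section
/- Let M be a finite set and C a downward closed collection of subsets of M. Let X ∈ C, let a ∈ int Δ_X, let b ∈ Δ_C with b ∉ int Δ_X, and suppose the segment {(1−t)·a + t·b : t ∈ [0,1]} is contained in Δ_C. Then exactly one of the following holds: (1) supp(b) is a proper subset of X, and for every 0 < t < 1 the point (1−t)·a + t·b lies in int Δ_X (the end of the segment lies in a proper face of Δ_X); or (2) there exists Z ∈ C with X a proper subset of Z such that for every 0 < t < 1 the point (1−t)·a + t·b lies in int Δ_Z. -/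
/-- Dichotomy for a segment starting in the interior of `Δ_X` and ending
outside it: either the open segment stays in `int Δ_X` and its end lies in a
proper face of `Δ_X`, or the open segment lies in the interior of `Δ_Z` for a
simplex `Z ∈ C` strictly containing `X` — and exactly one of the two holds. -/
theorem segment_leaving_interior_dichotomy {M : Type*} [Fintype M]
    (C : Set (Set M)) (hC : ∀ X ∈ C, ∀ Y ⊆ X, Y ∈ C)
    (X : Set M) (hX : X ∈ C) (a b : M → ℝ)
    (ha : a ∈ simplexInterior X) (hb : b ∈ realisation C)
    (hb' : b ∉ simplexInterior X)
    (hseg : ∀ t ∈ Set.Icc (0 : ℝ) 1,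
      (fun α => (1 - t) * a α + t * b α) ∈ realisation C) :
    Xor'
      (supportOf b ⊂ X ∧ ∀ t : ℝ, 0 < t → t < 1 →
        (fun α => (1 - t) * a α + t * b α) ∈ simplexInterior X)
      (∃ Z ∈ C, X ⊂ Z ∧ ∀ t : ℝ, 0 < t → t < 1 →
        (fun α => (1 - t) * a α + t * b α) ∈ simplexInterior Z) := by
  obtain ⟨⟨ha0, hasum, haout⟩, hapos⟩ := ha
  simp only [realisation, Set.mem_iUnion] at hb
  obtain ⟨Y, hY, hb0, hbsum, hbout⟩ := hb
  -- basic facts about the points on the open segment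
  have hsum : ∀ t : ℝ, (∑ α, ((1 - t) * a α + t * b α)) = 1 := by
    intro t
    rw [Finset.sum_add_distrib, ← Finset.mul_sum, ← Finset.mul_sum, hasum, hbsum]
    ring
  have hnn : ∀ t : ℝ, 0 < t → t < 1 → ∀ α, 0 ≤ (1 - t) * a α + t * b α := by
    intro t ht0 ht1 α
    have := ha0 α
    have := hb0 α
    nlinarith
  have hpos : ∀ t : ℝ, 0 < t → t < 1 → ∀ α, (α ∈ X ∨ 0 < b α) →
      0 < (1 - t) * a α + t * b α := by
    intro t ht0 ht1 α hα
    rcases hα with hα | hα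
    · have := hapos α hα
      have := hb0 α
      nlinarith
    · have := ha0 α
      nlinarith
  have hzero : ∀ t : ℝ, ∀ α, α ∉ X → b α ≤ 0 → (1 - t) * a α + t * b α = 0 := by
    intro t α hα hbα
    have h1 : a α = 0 := haout α hα
    have h2 : b α = 0 := le_antisymm hbα (hb0 α)
    rw [h1, h2]; ring
  by_cases hsub : supportOf b ⊆ X
  · -- left case
    left
    have hbX : ∀ α, α ∉ X → b α = 0 := by
      intro α hα
      by_contra h
      exact hα (hsub (lt_of_le_of_ne (hb0 α) (Ne.symm h)))
    have hbne : supportOf b ≠ X := by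
      intro h
      exact hb' ⟨⟨hb0, hbsum, hbX⟩, fun α hα => show α ∈ supportOf b from h ▸ hα⟩
    constructor
    · refine ⟨hsub.ssubset_of_ne hbne, fun t ht0 ht1 => ?_⟩
      refine ⟨⟨hnn t ht0 ht1, hsum t, fun α hα => hzero t α hα ?_⟩,
        fun α hα => hpos t ht0 ht1 α (Or.inl hα)⟩
      by_contra h
      exact hα (hsub (not_le.mp h))
    · rintro ⟨Z, hZ, hXZ, hint⟩
      obtain ⟨β, hβZ, hβX⟩ := Set.exists_of_ssubset hXZ
      have := (hint (1/2) (by norm_num) (by norm_num)).2 β hβZ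
      have h0 : (1 - (1:ℝ)/2) * a β + (1/2) * b β = 0 := by
        have := hzero (1/2) β hβX (le_of_eq (hbX β hβX))
        simpa using this
      simp only [h0] at this
      exact lt_irrefl 0 this
  · -- right case
    right
    obtain ⟨β, hβb, hβX⟩ := Set.not_subset.mp hsub
    have hβb' : 0 < b β := hβb
    set Z := X ∪ supportOf b with hZdef
    have hXZ : X ⊂ Z := by
      refine (Set.subset_union_left).ssubset_of_ne ?_
      intro h
      exact hβX (h ▸ Set.mem_union_right X hβb)
    have hZC : Z ∈ C := by
      obtain ⟨W, hW, hW0, hWsum, hWout⟩ := by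
        have := hseg (1/2) ⟨by norm_num, by norm_num⟩
        simpa only [realisation, Set.mem_iUnion] using this
      refine hC W hW Z fun α hα => ?_
      by_contra h
      have h1 : (1 - (1:ℝ)/2) * a α + 1/2 * b α = 0 := hWout α h
      have h2 : 0 < (1 - (1:ℝ)/2) * a α + (1/2) * b α := by
        refine hpos (1/2) (by norm_num) (by norm_num) α ?_
        rcases hα with hα | hα
        · exact Or.inl hα
        · exact Or.inr hα
      rw [h1] at h2
      exact lt_irrefl 0 h2
    constructor
    · refine ⟨Z, hZC, hXZ, fun t ht0 ht1 => ?_⟩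
      refine ⟨⟨hnn t ht0 ht1, hsum t, fun α hα => ?_⟩,
        fun α hα => hpos t ht0 ht1 α ?_⟩
      · have hα1 : α ∉ X := fun h => hα (Set.mem_union_left _ h)
        have hα2 : α ∉ supportOf b := fun h => hα (Set.mem_union_right _ h)
        exact hzero t α hα1 (not_lt.mp hα2)
      · rcases hα with hα | hα
        · exact Or.inl hα
        · exact Or.inr hα
    · rintro ⟨hbsub, _⟩
      exact hsub hbsub.subset
end
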